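/- Let R be a (possibly noncommutative) ring and let x, y, q be elements of R such that q commutes with both x and y, and yx = qxy. Then for every natural number n, (x+y)^n = Σ_{k=0}^{n} C_q(n,k) · x^k · y^{n-k}, where C_q(n,k) denotes the Gaussian binomial coefficient evaluated at q, i.e., the element of R obtained from the integer polynomials defined by the recurrence C_q(n,k) = C_q(n-1,k) + q^{n-k}·C_q(n-1,k-1) with boundary conditions C_q(n,0) = C_q(n,n) = 1. -/

import Mathlib

/-- The Gaussian binomial coefficient `C_q(n,k)`, as an element of a ring `R`
(the image of the integer polynomial defined by the recurrence
`C_q(n,k) = C_q(n-1,k) + q^{n-k}·C_q(n-1,k-1)` with `C_q(n,0) = C_q(n,n) = 1`). -/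
def gaussBinom {R : Type*} [Ring R] (q : R) : ℕ → ℕ → R
  | _, 0 => 1
  | 0, _ + 1 => 0
  | n + 1, k + 1 => gaussBinom q n (k + 1) + q ^ (n - k) * gaussBinom q n k

lemma gaussBinom_commute {R : Type*} [Ring R] {q r : R} (h : Commute q r) :
    ∀ n k, Commute (gaussBinom q n k) r
  | _, 0 => by simp [gaussBinom]
  | 0, _ + 1 => by simp [gaussBinom]
  | n + 1, k + 1 => by
    rw [gaussBinom]
    exact (gaussBinom_commute h n (k + 1)).add_left
      ((h.pow_left (n - k)).mul_left (gaussBinom_commute h n k))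

lemma gaussBinom_eq_zero {R : Type*} [Ring R] (q : R) :
    ∀ n k, n < k → gaussBinom q n k = 0
  | _, 0, hlt => by omega
  | 0, _ + 1, _ => by simp [gaussBinom]
  | n + 1, k + 1, hlt => by
    rw [gaussBinom, gaussBinom_eq_zero q n (k + 1) (by omega),
      gaussBinom_eq_zero q n k (by omega)]
    simp

/-- The q-binomial theorem of Schützenberger: if `q` commutes with `x` and `y`
and `y * x = q * (x * y)`, then
`(x+y)^n = ∑_{k=0}^n C_q(n,k) x^k y^{n-k}`. -/
theorem q_binomial_theorem {R : Type*} [Ring R] (q x y : R)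
    (hqx : Commute q x) (hqy : Commute q y) (h : y * x = q * (x * y)) (n : ℕ) :
    (x + y) ^ n = ∑ k ∈ Finset.range (n + 1), gaussBinom q n k * x ^ k * y ^ (n - k) := by
  have hyx : ∀ m : ℕ, y ^ m * x = q ^ m * (x * y ^ m) := by
    intro m
    induction m with
    | zero => simp
    | succ m ihm =>
      calc y ^ (m + 1) * x = y ^ m * (y * x) := by rw [pow_succ, mul_assoc]
        _ = y ^ m * q * (x * y) := by rw [h, mul_assoc]
        _ = q * (y ^ m * x) * y := by
            rw [← (hqy.pow_right m).eq, mul_assoc, mul_assoc, mul_assoc]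
        _ = q * (q ^ m * (x * y ^ m)) * y := by rw [ihm]
        _ = q ^ (m + 1) * (x * y ^ (m + 1)) := by
            simp only [pow_succ, mul_assoc]
            rw [← mul_assoc q (q ^ m), ((Commute.refl q).pow_right m).eq, mul_assoc]
  induction n with
  | zero => simp [gaussBinom]
  | succ n ih =>
    rw [pow_succ, ih, mul_add, Finset.sum_mul, Finset.sum_mul]
    have key : ∀ k ∈ Finset.range (n + 1),
        gaussBinom q n k * x ^ k * y ^ (n - k) * x
          = q ^ (n - k) * gaussBinom q n k * x ^ (k + 1) * y ^ (n - k) := by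
      intro k _
      have h1 : x ^ k * q ^ (n - k) = q ^ (n - k) * x ^ k := (hqx.pow_pow (n - k) k).eq.symm
      have h2 : gaussBinom q n k * q ^ (n - k) = q ^ (n - k) * gaussBinom q n k :=
        ((gaussBinom_commute (Commute.refl q) n k).pow_right (n - k)).eq
      rw [mul_assoc, mul_assoc, hyx (n - k), pow_succ]
      simp only [← mul_assoc]
      rw [mul_assoc (gaussBinom q n k) (x ^ k), h1, ← mul_assoc, h2]
    have key2 : ∀ k ∈ Finset.range (n + 1),
        gaussBinom q n k * x ^ k * y ^ (n - k) * y
          = gaussBinom q n k * x ^ k * y ^ (n + 1 - k) := by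
      intro k hk
      simp only [Finset.mem_range] at hk
      rw [mul_assoc, mul_assoc, ← pow_succ, show n - k + 1 = n + 1 - k by omega,
        ← mul_assoc]
    rw [Finset.sum_congr rfl key, Finset.sum_congr rfl key2, eq_comm]
    rw [Finset.sum_range_succ' _ (n + 1)]
    have fsucc : ∀ j ∈ Finset.range (n + 1),
        gaussBinom q (n + 1) (j + 1) * x ^ (j + 1) * y ^ (n + 1 - (j + 1))
          = q ^ (n - j) * gaussBinom q n j * x ^ (j + 1) * y ^ (n - j)
            + gaussBinom q n (j + 1) * x ^ (j + 1) * y ^ (n + 1 - (j + 1)) := by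
      intro j hj
      show (gaussBinom q n (j + 1) + q ^ (n - j) * gaussBinom q n j) * x ^ (j + 1) *
          y ^ (n + 1 - (j + 1)) = _
      rw [show n + 1 - (j + 1) = n - j by omega, add_mul, add_mul, add_comm]
    rw [Finset.sum_congr rfl fsucc, Finset.sum_add_distrib]
    have f0 : gaussBinom q (n + 1) 0 * x ^ 0 * y ^ (n + 1 - 0) = y ^ (n + 1) := by
      simp [gaussBinom]
    rw [f0]
    have hBC : (∑ j ∈ Finset.range (n + 1),
          gaussBinom q n (j + 1) * x ^ (j + 1) * y ^ (n + 1 - (j + 1))) + y ^ (n + 1)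
        = ∑ k ∈ Finset.range (n + 1), gaussBinom q n k * x ^ k * y ^ (n + 1 - k) := by
      have h1 := Finset.sum_range_succ'
        (fun k => gaussBinom q n k * x ^ k * y ^ (n + 1 - k)) (n + 1)
      rw [show (gaussBinom q n 0 * x ^ 0 * y ^ (n + 1 - 0) : R) = y ^ (n + 1) by
        simp [gaussBinom]] at h1
      rw [← h1, Finset.sum_range_succ, gaussBinom_eq_zero q n (n + 1) (by omega)]
      simp
    rw [add_assoc, hBC]
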